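/- Let H be an m-semigroup with standard basis {m, s₁, …, s_{m−1}} and s_max = max{s₁, …, s_{m−1}}, and let n be an odd integer with n ≥ c(H) + m − 1 and n ≥ 2·g(H) + 3. Then the numerical semigroup H̃ = 2H + nℕ₀ + (n + 2(s_max − m))ℕ₀ has genus 2·g(H) + (n−1)/2 − 1. -/

import Mathlib

/-- A numerical semigroup: a submonoid of ℕ with finite complement. -/
structure NumSemigroup where
  carrier : Set ℕ
  zero_mem : 0 ∈ carrier
  add_mem : ∀ a ∈ carrier, ∀ b ∈ carrier, a + b ∈ carrier
  cofinite : carrierᶜ.Finite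

namespace NumSemigroup

/-- The genus: cardinality of the complement in ℕ. -/
noncomputable def genus (H : NumSemigroup) : ℕ := H.carrierᶜ.ncard

/-- `m` is the least positive element of `H` (so `H` is an `m`-semigroup). -/
def IsMult (H : NumSemigroup) (m : ℕ) : Prop :=
  IsLeast {x | x ∈ H.carrier ∧ 0 < x} m

/-- `c` is the conductor: the least `c` with `c + ℕ ⊆ H`. -/
def IsConductor (H : NumSemigroup) (c : ℕ) : Prop :=
  IsLeast {c | ∀ x, c ≤ x → x ∈ H.carrier} c

/-- `n` is the least odd element of `H`, i.e. `n = n(H)`. -/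
def IsLeastOdd (H : NumSemigroup) (n : ℕ) : Prop :=
  IsLeast {x | x ∈ H.carrier ∧ Odd x} n

end NumSemigroup

/-- `d₂(A) = {h/2 : h ∈ A even}`. -/
def d2 (A : Set ℕ) : Set ℕ := {x | 2 * x ∈ A}

/-- `2A + nℕ₀ = {2h + ni : h ∈ A, i ∈ ℕ₀}`. -/
def doubleAdd (A : Set ℕ) (n : ℕ) : Set ℕ :=
  {x | ∃ h ∈ A, ∃ i : ℕ, x = 2 * h + n * i}

/-- `2A + aℕ₀ + bℕ₀ = {2h + ai + bj : h ∈ A, i, j ∈ ℕ₀}`. -/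
def doubleAdd2 (A : Set ℕ) (a b : ℕ) : Set ℕ :=
  {x | ∃ h ∈ A, ∃ i : ℕ, ∃ j : ℕ, x = 2 * h + a * i + b * j}

/-- The standard basis `S(A) = {m, s₁, …, s_{m-1}}` of an `m`-semigroup,
where `sᵢ = min {h ∈ A : h ≡ i mod m}`. -/
def stdBasis (A : Set ℕ) (m : ℕ) : Set ℕ :=
  insert m {s | ∃ i, 0 < i ∧ i < m ∧ IsLeast {h | h ∈ A ∧ h % m = i} s}

/-- `A` (of genus `g`) is symmetric: `z ∈ A ↔ 2g - 1 - z ∉ A` for all integers `z`. -/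
def SymSgp (A : Set ℕ) (g : ℕ) : Prop :=
  ∀ z : ℤ, (∃ a ∈ A, (a : ℤ) = z) ↔ ¬ ∃ a ∈ A, (a : ℤ) = 2 * (g : ℤ) - 1 - z

/-- The submonoid of ℕ generated by a set, as a set: `⟨a₁,…,a_k⟩`. -/
def genSG (s : Set ℕ) : Set ℕ := (AddSubmonoid.closure s : AddSubmonoid ℕ)

theorem stmt7 (H : NumSemigroup) (m c n smax : ℕ) (s : ℕ → ℕ)
    (hm : H.IsMult m) (hc : H.IsConductor c)
    (hs : ∀ i, 0 < i → i < m → IsLeast {h | h ∈ H.carrier ∧ h % m = i} (s i))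
    (hsmax : IsGreatest {x | ∃ i, 0 < i ∧ i < m ∧ x = s i} smax)
    (hodd : Odd n) (h1 : c + m - 1 ≤ n) (h2 : 2 * H.genus + 3 ≤ n) :
    (doubleAdd2 H.carrier n (n + 2 * (smax - m)))ᶜ.ncard =
      2 * H.genus + (n - 1) / 2 - 1 := by
  obtain ⟨⟨k, hk0, hkm, hsk⟩, hub⟩ := hsmax
  have hm0 : 0 < m := hm.1.2
  have hmH : m ∈ H.carrier := hm.1.1
  have hcH : ∀ x, c ≤ x → x ∈ H.carrier := hc.1
  have hn2 : n % 2 = 1 := Nat.odd_iff.mp hodd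
  have hcn : c ≤ n := by omega
  have hGfin : H.carrierᶜ.Finite := H.cofinite
  -- multiples of m are in H
  have hmul : ∀ t : ℕ, m * t ∈ H.carrier := by
    intro t
    induction t with
    | zero => simpa using H.zero_mem
    | succ t ih =>
      have := H.add_mem _ ih _ hmH
      simpa [Nat.mul_succ] using this
  -- facts about s k
  have hskH : s k ∈ H.carrier := (hs k hk0 hkm).1.1
  have hskm : s k % m = k := (hs k hk0 hkm).1.2
  have hskpos : 0 < s k := by
    rcases Nat.eq_zero_or_pos (s k) with h | h
    · rw [h] at hskm; simp at hskm; omega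
    · exact h
  have hmsk : m ≤ s k := hm.2 ⟨hskH, hskpos⟩
  have hskne : s k ≠ m := by
    intro h; rw [h, Nat.mod_self] at hskm; omega
  set d := smax - m with hd_def
  have hsd : s k = m + d := by omega
  have hdm : d % m = k := by
    calc d % m = (m + d) % m := (Nat.add_mod_left m d).symm
      _ = s k % m := by rw [hsd]
      _ = k := hskm
  -- membership from residue
  have memH_of : ∀ y : ℕ, y % m ≠ 0 → s (y % m) ≤ y → y ∈ H.carrier := by
    intro y hy0 hsy
    have hi1 : 0 < y % m := Nat.pos_of_ne_zero hy0
    have him : y % m < m := Nat.mod_lt _ hm0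
    have hls := hs (y % m) hi1 him
    have hsm : s (y % m) % m = y % m := hls.1.2
    have hdvd : m ∣ y - s (y % m) := (Nat.modEq_iff_dvd' hsy).mp hsm
    obtain ⟨t, ht⟩ := hdvd
    have hy : y = s (y % m) + m * t := by omega
    rw [hy]
    exact H.add_mem _ hls.1.1 _ (hmul t)
  have mem_of_mod0 : ∀ y : ℕ, y % m = 0 → y ∈ H.carrier := by
    intro y hy
    have : m * (y / m) = y := Nat.mul_div_cancel' (Nat.dvd_of_mod_eq_zero hy)
    rw [← this]; exact hmul _
  have le_of_mem : ∀ y : ℕ, y ∈ H.carrier → y % m ≠ 0 → s (y % m) ≤ y := by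
    intro y hy h0
    exact (hs (y % m) (Nat.pos_of_ne_zero h0) (Nat.mod_lt _ hm0)).2 ⟨hy, rfl⟩
  -- d is a gap
  have hdG : d ∉ H.carrier := by
    intro hdH
    have := le_of_mem d hdH (by omega)
    rw [hdm] at this
    omega
  -- key uniqueness: if a gap equals d + h with h in H, then h = 0
  have key : ∀ y h : ℕ, y ∉ H.carrier → h ∈ H.carrier → y = d + h → h = 0 := by
    intro y h hy hh heq
    by_contra hh0
    have hhm : m ≤ h := hm.2 ⟨hh, Nat.pos_of_ne_zero hh0⟩
    by_cases hj0 : h % m = 0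
    · obtain ⟨t, rfl⟩ := Nat.dvd_of_mod_eq_zero hj0
      have ht1 : 1 ≤ t := by
        rcases Nat.eq_zero_or_pos t with h0 | h0
        · subst h0; simp at hhm; omega
        · exact h0
      rcases t with _ | t'
      · omega
      · have hmt : m * (t' + 1) = m * t' + m := Nat.mul_succ m t'
        have hyH : y ∈ H.carrier := by
          have : y = s k + m * t' := by omega
          rw [this]; exact H.add_mem _ hskH _ (hmul t')
        exact hy hyH
    · set j := h % m with hj_def
      have hj1 : 0 < j := Nat.pos_of_ne_zero hj0
      have hjm : j < m := Nat.mod_lt _ hm0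
      have hsjH : s j ∈ H.carrier := (hs j hj1 hjm).1.1
      have hsjm : s j % m = j := (hs j hj1 hjm).1.2
      have hsjh : s j ≤ h := le_of_mem h hh hj0
      have hsjpos : 0 < s j := by
        rcases Nat.eq_zero_or_pos (s j) with h0 | h0
        · rw [h0] at hsjm; simp at hsjm; omega
        · exact h0
      have hsumH : s j + s k ∈ H.carrier := H.add_mem _ hsjH _ hskH
      set l := (s j + s k) % m with hl_def
      have hym : y % m = l := by
        rw [heq, Nat.add_mod d h, hdm, ← hj_def, hl_def, Nat.add_mod (s j) (s k),
          hsjm, hskm, Nat.add_comm j k]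
      by_cases hl0 : l = 0
      · exact hy (mem_of_mod0 y (by omega))
      · have hl1 : 0 < l := Nat.pos_of_ne_zero hl0
        have hlm : l < m := by rw [hl_def]; exact Nat.mod_lt _ hm0
        have hslm : s l % m = l := (hs l hl1 hlm).1.2
        have hsl_le : s l ≤ s j + s k := (hs l hl1 hlm).2 ⟨hsumH, rfl⟩
        have hsl_smax : s l ≤ smax := hub ⟨l, hl1, hlm, rfl⟩
        have hne : s l ≠ s j + s k := by omega
        have hdvd : m ∣ (s j + s k) - s l := by
          refine (Nat.modEq_iff_dvd' hsl_le).mp ?_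
          show s l % m = (s j + s k) % m
          rw [hslm]
        obtain ⟨q, hq⟩ := hdvd
        have hq1 : 1 ≤ q := by
          rcases Nat.eq_zero_or_pos q with h0 | h0
          · subst h0; simp at hq; omega
          · exact h0
        have hmq : m ≤ m * q := Nat.le_mul_of_pos_right m hq1
        have hslm2 : s l + m ≤ s j + s k := by omega
        have hyl : s l ≤ y := by omega
        have : y ∈ H.carrier := by
          apply memH_of y (by omega)
          rw [hym]; exact hyl
        exact hy this
  -- even decomposition helper
  have even_case : ∀ h : ℕ, h ∈ H.carrier → ∀ i j : ℕ, (i + j) % 2 = 0 →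
      ∃ h' ∈ H.carrier, 2 * h + n * i + (n + 2 * d) * j = 2 * h' := by
    intro h hh i j hij
    by_cases hij0 : i + j = 0
    · have hi : i = 0 := by omega
      have hj : j = 0 := by omega
      subst hi; subst hj
      exact ⟨h, hh, by ring⟩
    · have h2ij : 2 ≤ i + j := by omega
      have hb2 : (n + 2 * d) % 2 = 1 := by omega
      have hmod : (n * i + (n + 2 * d) * j) % 2 = (i + j) % 2 := by
        rw [Nat.add_mod (n * i), Nat.mul_mod n i, Nat.mul_mod (n + 2 * d) j, hn2, hb2]
        omega
      have hXn : 2 * n ≤ n * i + (n + 2 * d) * j := by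
        calc 2 * n = n * 2 := by ring
          _ ≤ n * (i + j) := Nat.mul_le_mul_left n h2ij
          _ = n * i + n * j := by ring
          _ ≤ n * i + (n + 2 * d) * j := by
              exact Nat.add_le_add_left (Nat.mul_le_mul_right j (by omega)) _
      refine ⟨h + (n * i + (n + 2 * d) * j) / 2, ?_, by omega⟩
      exact hcH _ (by omega)
  -- structure of the doubled semigroup
  have Tchar : ∀ x : ℕ, x ∈ doubleAdd2 H.carrier n (n + 2 * d) ↔
      ∃ h ∈ H.carrier, (x = 2 * h ∨ x = n + 2 * h ∨ x = n + 2 * d + 2 * h) := by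
    intro x
    constructor
    · rintro ⟨h, hh, i, j, rfl⟩
      by_cases hp : (i + j) % 2 = 0
      · obtain ⟨h', hh', he⟩ := even_case h hh i j hp
        exact ⟨h', hh', Or.inl he⟩
      · rcases i with _ | i'
        · rcases j with _ | j'
          · omega
          · obtain ⟨h', hh', he⟩ := even_case h hh 0 j' (by omega)
            refine ⟨h', hh', Or.inr (Or.inr ?_)⟩
            have hmt : (n + 2 * d) * (j' + 1) = (n + 2 * d) * j' + (n + 2 * d) :=
              Nat.mul_succ _ _
            omega
        · obtain ⟨h', hh', he⟩ := even_case h hh i' j (by omega)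
          refine ⟨h', hh', Or.inr (Or.inl ?_)⟩
          have hmt : n * (i' + 1) = n * i' + n := Nat.mul_succ _ _
          omega
    · rintro ⟨h, hh, (rfl | rfl | rfl)⟩
      · exact ⟨h, hh, 0, 0, by ring⟩
      · exact ⟨h, hh, 1, 0, by ring⟩
      · exact ⟨h, hh, 0, 1, by ring⟩
  -- the three pieces of the complement
  set A1 : Set ℕ := (fun y => 2 * y) '' H.carrierᶜ with hA1_def
  set A2 : Set ℕ := (fun t => 2 * t + 1) '' (Set.Iio ((n - 1) / 2)) with hA2_def
  set A3 : Set ℕ := (fun y => n + 2 * y) '' (H.carrierᶜ \ {d}) with hA3_def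
  have hcompl : (doubleAdd2 H.carrier n (n + 2 * d))ᶜ = A1 ∪ A2 ∪ A3 := by
    ext x
    simp only [Set.mem_compl_iff, Set.mem_union, hA1_def, hA2_def, hA3_def,
      Set.mem_image, Set.mem_Iio, Set.mem_diff, Set.mem_singleton_iff]
    rw [Tchar x]
    constructor
    · intro hx
      by_cases hx2 : x % 2 = 0
      · left; left
        refine ⟨x / 2, ?_, by omega⟩
        intro hyH
        exact hx ⟨x / 2, hyH, Or.inl (by omega)⟩
      · by_cases hxn : x < n
        · left; right
          exact ⟨x / 2, by omega, by omega⟩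
        · right
          refine ⟨(x - n) / 2, ⟨?_, ?_⟩, by omega⟩
          · intro hyH
            exact hx ⟨(x - n) / 2, hyH, Or.inr (Or.inl (by omega))⟩
          · intro hyd
            exact hx ⟨0, H.zero_mem, Or.inr (Or.inr (by omega))⟩
    · rintro ((⟨y, hy, rfl⟩ | ⟨t, ht, rfl⟩) | ⟨y, ⟨hyH, hyd⟩, rfl⟩) ⟨h, hh, hcase⟩
      · rcases hcase with h1' | h1' | h1'
        · have : y = h := by omega
          exact hy (this ▸ hh)
        · omega
        · omega
      · rcases hcase with h1' | h1' | h1'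
        · omega
        · omega
        · omega
      · rcases hcase with h1' | h1' | h1'
        · omega
        · have : y = h := by omega
          exact hyH (this ▸ hh)
        · have hyh : y = d + h := by omega
          have := key y h hyH hh hyh
          exact hyd (by omega)
  -- counting
  have hinj1 : Function.Injective (fun y : ℕ => 2 * y) := by
    intro a b hab
    have : 2 * a = 2 * b := hab
    omega
  have hinj2 : Function.Injective (fun t : ℕ => 2 * t + 1) := by
    intro a b hab
    have : 2 * a + 1 = 2 * b + 1 := hab
    omega
  have hinj3 : Function.Injective (fun y : ℕ => n + 2 * y) := by
    intro a b hab
    have : n + 2 * a = n + 2 * b := hab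
    omega
  have hfin1 : A1.Finite := hGfin.image _
  have hfin2 : A2.Finite := (Set.finite_Iio _).image _
  have hfin3 : A3.Finite := (hGfin.diff : (H.carrierᶜ \ {d}).Finite).image _
  have hd12_3 : Disjoint (A1 ∪ A2) A3 := by
    rw [Set.disjoint_left]
    rintro x (⟨y, hy, rfl⟩ | ⟨t, ht, rfl⟩) ⟨y', hy', heq⟩
    · simp only at heq; omega
    · simp only [Set.mem_Iio] at ht
      simp only at heq
      omega
  have hd1_2 : Disjoint A1 A2 := by
    rw [Set.disjoint_left]
    rintro x ⟨y, hy, rfl⟩ ⟨t, ht, heq⟩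
    simp only at heq
    omega
  have hA1c : A1.ncard = H.genus := by
    rw [hA1_def, Set.ncard_image_of_injective _ hinj1]; rfl
  have hA2c : A2.ncard = (n - 1) / 2 := by
    rw [hA2_def, Set.ncard_image_of_injective _ hinj2, ← Finset.coe_range,
      Set.ncard_coe_finset, Finset.card_range]
  have hdGc : d ∈ H.carrierᶜ := hdG
  have hA3c : A3.ncard = H.genus - 1 := by
    rw [hA3_def, Set.ncard_image_of_injective _ hinj3,
      Set.ncard_diff_singleton_of_mem hdGc]; rfl
  have hg1 : 1 ≤ H.genus := by
    have : 0 < H.carrierᶜ.ncard := (Set.ncard_pos hGfin).mpr ⟨d, hdG⟩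
    exact this
  rw [hcompl, Set.ncard_union_eq hd12_3 (hfin1.union hfin2) hfin3,
    Set.ncard_union_eq hd1_2 hfin1 hfin2, hA1c, hA2c, hA3c]
  omega
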